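/- For every real number t ≥ 0, the function t ↦ (sinh t / t) · e^{−t} is non-increasing on [0, ∞) (with the convention sinh t / t = 1 at t = 0); consequently, for all 0 ≤ t ≤ s one has sinh(s)/s ≤ (sinh(s−t)/(s−t)) · e^{t}. -/

import Mathlib

open scoped BigOperators

noncomputable section

/-- ℓ¹-norm of an integer vector. -/
def l1 {n : ℕ} (k : Fin n → ℤ) : ℝ := ∑ i, |(k i : ℝ)|

/-- sinh x / x, extended by 1 at x = 0. -/
def sr (x : ℝ) : ℝ := if x = 0 then 1 else Real.sinh x / x

/-- The weight w_k(t) = ∏ i, sinh (t k i) / (t k i). -/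
def wt {n : ℕ} (t : ℝ) (k : Fin n → ℤ) : ℝ := ∏ i, sr (t * (k i : ℝ))

/-- Wiener (analytic) norm of a Fourier coefficient family. -/
def wiener {n : ℕ} (c : (Fin n → ℤ) → ℂ) (s : ℝ) : ℝ :=
  ∑' k, ‖c k‖ * Real.exp (s * l1 k)

/-- Strip-averaged L² norm of a Fourier coefficient family. -/
def stripL2 {n : ℕ} (c : (Fin n → ℤ) → ℂ) (s : ℝ) : ℝ :=
  Real.sqrt (∑' k, ‖c k‖ ^ 2 * wt (2 * s) k)

lemma sr_exp_eq {t : ℝ} (ht : 0 < t) :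
    sr t * Real.exp (-t) = (1 - Real.exp (-(2*t))) / (2*t) := by
  rw [sr, if_neg ht.ne', Real.sinh_eq]
  have h2 : Real.exp (-(2*t)) = Real.exp (-t) * Real.exp (-t) := by
    rw [← Real.exp_add]; ring_nf
  have h3 : Real.exp t * Real.exp (-t) = 1 := by
    rw [← Real.exp_add]; simp
  field_simp
  nlinarith [Real.exp_pos t, Real.exp_pos (-t), show Real.exp (-(t*2)) = Real.exp (-(2*t)) by ring_nf]

lemma key_le {a b : ℝ} (ha : 0 ≤ a) (hab : a ≤ b) :
    sr b * Real.exp (-b) ≤ sr a * Real.exp (-a) := by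
  have e1 : ∀ c : ℝ, 0 < c →
      (Real.exp (-(2*c)) - 1) / (-(2*c) - 0) = (1 - Real.exp (-(2*c)))/(2*c) := by
    intro c hc
    rw [sub_zero]
    have : (2*c) ≠ 0 := by positivity
    field_simp
    ring
  rcases eq_or_lt_of_le hab with rfl | hab
  · exact le_rfl
  rcases eq_or_lt_of_le ha with rfl | ha
  · have hb : 0 < b := hab
    rw [sr_exp_eq hb, sr, if_pos rfl, neg_zero, Real.exp_zero, one_mul]
    rw [div_le_one (by positivity)]
    have := Real.add_one_le_exp (-(2*b))
    linarith
  · have hb : 0 < b := ha.trans hab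
    rw [sr_exp_eq hb, sr_exp_eq ha]
    have hs := convexOn_exp.secant_mono (a := 0) (x := -(2*b)) (y := -(2*a))
      trivial trivial trivial (by linarith) (by linarith) (by linarith)
    simp only [Real.exp_zero] at hs
    rw [e1 b hb, e1 a ha] at hs
    exact hs

theorem sinh_ratio_monotone :
    (AntitoneOn (fun t : ℝ => sr t * Real.exp (-t)) (Set.Ici 0)) ∧
    (∀ s t : ℝ, 0 ≤ t → t ≤ s → sr s ≤ sr (s - t) * Real.exp t) := by
  constructor
  · intro a ha b hb hab
    exact key_le ha hab
  · intro s t ht hts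
    have h := key_le (a := s - t) (b := s) (by linarith) (by linarith)
    have hE : (0:ℝ) < Real.exp (-s) := Real.exp_pos _
    have := mul_le_mul_of_nonneg_right h (le_of_lt (Real.exp_pos s))
    rw [mul_assoc, mul_assoc, ← Real.exp_add, ← Real.exp_add] at this
    simp only [neg_add_cancel, Real.exp_zero, mul_one] at this
    calc sr s = sr s * 1 := by ring
    _ ≤ sr (s - t) * Real.exp (-(s-t) + s) := by simpa using this
    _ = sr (s - t) * Real.exp t := by ring_nf
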